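/- Let T be an infinite rooted tree, ψ : T → ℂ, and m ≠ n natural numbers. If μ := sup_{v≠o} |ψ'(v)|·ℓ_m(|v|)·Λ_n(|v|) and ν := sup_{v≠o} |ψ(v⁻)|·Λ_n(|v|)/Λ_m(|v|) are both finite, then the multiplication operator M_ψ maps L^(m) into L^(n), and for every f ∈ L^(m), ‖ψf‖_n ≤ (|ψ(o)| + μ + ν)·‖f‖_m. -/

import Mathlib

open Real Filter

/-- Iterated logarithm: ℓ₀(x) = x, ℓ_{j+1}(x) = 1 + log ℓ_j(x). -/
noncomputable def ell : ℕ → ℝ → ℝ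
  | 0, x => x
  | j + 1, x => 1 + Real.log (ell j x)

/-- Λ_k(x) = ∏_{j=0}^{k-1} ℓ_j(x). -/
noncomputable def Lam (k : ℕ) (x : ℝ) : ℝ := ∏ j ∈ Finset.range k, ell j x

/-- Discrete derivative of f on a rooted tree given by a parent map:
`f v - f (parent v)` (automatically 0 at the root since `parent o = o`). -/
def Der {V : Type*} (parent : V → V) (f : V → ℂ) (v : V) : ℂ := f v - f (parent v)

/-- The set of values |f'(v)|·Λ_k(|v|) over v ≠ o; f ∈ L^(k) iff this set is bounded above. -/
def lipSet {V : Type*} (o : V) (parent : V → V) (depth : V → ℕ) (k : ℕ) (f : V → ℂ) : Set ℝ :=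
  {r | ∃ v, v ≠ o ∧ r = ‖Der parent f v‖ * Lam k (depth v)}

/-- ‖f‖_k = |f(o)| + sup_{v ≠ o} |f'(v)|·Λ_k(|v|). -/
noncomputable def lipNorm {V : Type*} (o : V) (parent : V → V) (depth : V → ℕ) (k : ℕ)
    (f : V → ℂ) : ℝ :=
  ‖f o‖ + sSup (lipSet o parent depth k f)

lemma ell_ge_one {x : ℝ} (hx : 1 ≤ x) (j : ℕ) : 1 ≤ ell j x := by
  induction j with
  | zero => exact hx
  | succ j ih => simp only [ell]; linarith [Real.log_nonneg ih]

lemma ell_mono {x y : ℝ} (hx : 1 ≤ x) (hxy : x ≤ y) (j : ℕ) : ell j x ≤ ell j y := by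
  induction j with
  | zero => exact hxy
  | succ j ih =>
    simp only [ell]
    have := Real.log_le_log (by linarith [ell_ge_one hx j]) ih
    linarith

lemma one_le_Lam {x : ℝ} (hx : 1 ≤ x) (k : ℕ) : 1 ≤ Lam k x := by
  induction k with
  | zero => simp [Lam]
  | succ k ih =>
    rw [Lam, Finset.prod_range_succ]
    have h1 : (1:ℝ) ≤ ∏ j ∈ Finset.range k, ell j x := ih
    have := ell_ge_one hx k
    nlinarith

lemma Lam_pos {x : ℝ} (hx : 1 ≤ x) (k : ℕ) : 0 < Lam k x :=
  lt_of_lt_of_le one_pos (one_le_Lam hx k)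

lemma ell_one (j : ℕ) : ell j 1 = 1 := by
  induction j with
  | zero => rfl
  | succ j ih => simp [ell, ih]

lemma Lam_one (k : ℕ) : Lam k 1 = 1 := by simp [Lam, ell_one]

lemma ell_gap {x y : ℝ} (hx : 1 ≤ x) (hxy : x ≤ y) (m : ℕ) :
    (y - x) / Lam m y ≤ ell m y - ell m x := by
  induction m with
  | zero => simp [ell, Lam]
  | succ m ih =>
    have ha := ell_ge_one hx m
    have hb : ell m x ≤ ell m y := ell_mono hx hxy m
    have hy : (0:ℝ) < ell m y := by linarith
    have hx0 : (0:ℝ) < ell m x := by linarith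
    have key : (ell m y - ell m x) / ell m y ≤ Real.log (ell m y) - Real.log (ell m x) := by
      have h1 := Real.log_le_sub_one_of_pos (show 0 < ell m x / ell m y by positivity)
      rw [Real.log_div (by linarith) (by linarith)] at h1
      have h2 : (ell m y - ell m x) / ell m y = 1 - ell m x / ell m y := by field_simp
      rw [h2]; linarith
    have step : (y - x) / Lam m y / ell m y ≤ (ell m y - ell m x) / ell m y := by
      gcongr
    have heq : (y - x) / Lam m y / ell m y = (y - x) / Lam (m+1) y := by
      rw [div_div, Lam, Lam, Finset.prod_range_succ]
    rw [heq] at step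
    simp only [ell]
    linarith
lemma sum_inv_Lam_le (m : ℕ) : ∀ d : ℕ, 1 ≤ d →
    ∑ j ∈ Finset.Icc 1 d, 1 / Lam m (j : ℝ) ≤ ell m d := by
  intro d
  induction d with
  | zero => intro h; omega
  | succ d ih =>
    intro _
    rcases Nat.eq_zero_or_pos d with h0 | hd
    · subst h0
      simp [Lam_one, ell_one]
    · rw [Finset.sum_Icc_succ_top (by omega)]
      have hgap := ell_gap (x := (d:ℝ)) (y := ((d+1:ℕ):ℝ)) (by exact_mod_cast hd) (by push_cast; linarith) m
      have : ((d+1:ℕ):ℝ) - (d:ℝ) = 1 := by push_cast; ring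
      rw [this] at hgap
      have := ih hd
      have hmono : ell m (d:ℝ) ≤ ell m ((d+1:ℕ):ℝ) := ell_mono (by exact_mod_cast hd) (by push_cast; linarith) m
      linarith

lemma point_eval {V : Type*} (o : V) (parent : V → V) (depth : V → ℕ)
    (hdepth0 : depth o = 0)
    (hdepth : ∀ v, v ≠ o → depth v = depth (parent v) + 1)
    (f : V → ℂ) (m : ℕ) (S : ℝ)
    (hS : ∀ v, v ≠ o → ‖Der parent f v‖ * Lam m (depth v) ≤ S) :
    ∀ d : ℕ, ∀ v, v ≠ o → depth v = d →
      ‖f v‖ ≤ ‖f o‖ + S * ∑ j ∈ Finset.Icc 1 d, 1 / Lam m (j : ℝ) := by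
  intro d
  induction d using Nat.strong_induction_on with
  | _ d ih =>
    intro v hv hd
    have hd1 : depth v = depth (parent v) + 1 := hdepth v hv
    have hone : (1:ℝ) ≤ (depth v : ℝ) := by exact_mod_cast Nat.one_le_iff_ne_zero.mpr (by omega)
    have hLpos := Lam_pos hone m
    have hDer : ‖Der parent f v‖ ≤ S / Lam m (depth v) :=
      (le_div_iff₀ hLpos).mpr (hS v hv)
    have htri : ‖f v‖ ≤ ‖f (parent v)‖ + ‖Der parent f v‖ := by
      have : f v = f (parent v) + Der parent f v := by simp [Der]
      rw [this]; exact norm_add_le _ _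
    by_cases hp : parent v = o
    · have hdv : depth v = 1 := by rw [hd1, hp, hdepth0]
      subst hd
      rw [hdv]
      simp only [Finset.Icc_self, Finset.sum_singleton, Nat.cast_one, Lam_one, div_one]
      rw [hdv, Nat.cast_one, Lam_one, div_one] at hDer
      rw [hp] at htri
      linarith
    · have hdp : depth (parent v) = d - 1 := by omega
      have hd0 : 1 ≤ d := by omega
      have hIH := ih (d-1) (by omega) (parent v) hp hdp
      have hsplit : ∑ j ∈ Finset.Icc 1 d, 1 / Lam m (j:ℝ)
          = (∑ j ∈ Finset.Icc 1 (d-1), 1 / Lam m (j:ℝ)) + 1 / Lam m (d:ℝ) := by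
        have : d = (d-1) + 1 := by omega
        rw [this, Finset.sum_Icc_succ_top (by omega)]
        congr 2 <;> omega
      rw [hsplit]
      have : S / Lam m (depth v) = S * (1 / Lam m (d:ℝ)) := by rw [hd]; ring
      rw [this] at hDer
      linarith

/-- If μ = sup |ψ'(v)|ℓ_m(|v|)Λ_n(|v|) and ν = sup |ψ(v⁻)|Λ_n(|v|)/Λ_m(|v|) are finite,
then M_ψ maps L^(m) into L^(n) with ‖ψf‖_n ≤ (|ψ(o)| + μ + ν)·‖f‖_m. -/
theorem mult_bounded_sufficient {V : Type*} (o : V) (parent : V → V) (depth : V → ℕ)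
    (hpar : parent o = o) (hdepth0 : depth o = 0)
    (hdepth : ∀ v, v ≠ o → depth v = depth (parent v) + 1)
    (hchild : ∀ v, ∃ w, w ≠ o ∧ parent w = v)
    (ψ : V → ℂ) (m n : ℕ) (hmn : m ≠ n)
    (hμ : BddAbove {r : ℝ | ∃ v, v ≠ o ∧
      r = ‖Der parent ψ v‖ * ell m (depth v) * Lam n (depth v)})
    (hν : BddAbove {r : ℝ | ∃ v, v ≠ o ∧
      r = ‖ψ (parent v)‖ * Lam n (depth v) / Lam m (depth v)}) :
    ∀ f : V → ℂ, BddAbove (lipSet o parent depth m f) →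
      BddAbove (lipSet o parent depth n (fun v => ψ v * f v)) ∧
      lipNorm o parent depth n (fun v => ψ v * f v) ≤
        (‖ψ o‖ +
          sSup {r : ℝ | ∃ v, v ≠ o ∧
            r = ‖Der parent ψ v‖ * ell m (depth v) * Lam n (depth v)} +
          sSup {r : ℝ | ∃ v, v ≠ o ∧
            r = ‖ψ (parent v)‖ * Lam n (depth v) / Lam m (depth v)}) *
          lipNorm o parent depth m f := by
  intro f hf
  set μ := sSup {r : ℝ | ∃ v, v ≠ o ∧
      r = ‖Der parent ψ v‖ * ell m (depth v) * Lam n (depth v)} with hμdef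
  set ν := sSup {r : ℝ | ∃ v, v ≠ o ∧
      r = ‖ψ (parent v)‖ * Lam n (depth v) / Lam m (depth v)} with hνdef
  set S := sSup (lipSet o parent depth m f) with hSdef
  have hdge : ∀ v : V, v ≠ o → (1:ℝ) ≤ (depth v : ℝ) := by
    intro v hv
    have := hdepth v hv
    exact_mod_cast Nat.one_le_iff_ne_zero.mpr (by omega)
  obtain ⟨w, hw, hwp⟩ := hchild o
  -- upper bound facts
  have hS_le : ∀ v, v ≠ o → ‖Der parent f v‖ * Lam m (depth v) ≤ S :=
    fun v hv => le_csSup hf ⟨v, hv, rfl⟩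
  have hμ_le : ∀ v, v ≠ o →
      ‖Der parent ψ v‖ * ell m (depth v) * Lam n (depth v) ≤ μ :=
    fun v hv => le_csSup hμ ⟨v, hv, rfl⟩
  have hν_le : ∀ v, v ≠ o →
      ‖ψ (parent v)‖ * Lam n (depth v) / Lam m (depth v) ≤ ν :=
    fun v hv => le_csSup hν ⟨v, hv, rfl⟩
  -- nonnegativity
  have hS0 : 0 ≤ S :=
    le_trans (mul_nonneg (norm_nonneg _) (Lam_pos (hdge w hw) m).le) (hS_le w hw)
  have hμ0 : 0 ≤ μ := by
    refine le_trans ?_ (hμ_le w hw)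
    have := ell_ge_one (hdge w hw) m
    have := Lam_pos (hdge w hw) n
    positivity
  have hν0 : 0 ≤ ν := by
    refine le_trans ?_ (hν_le w hw)
    have := Lam_pos (hdge w hw) n
    have := Lam_pos (hdge w hw) m
    positivity
  have hfo0 : (0:ℝ) ≤ ‖f o‖ := norm_nonneg _
  -- point evaluation bound
  have hpt : ∀ v, v ≠ o →
      ‖f v‖ ≤ ell m (depth v) * (‖f o‖ + S) := by
    intro v hv
    have h1 := point_eval o parent depth hdepth0 hdepth f m S hS_le (depth v) v hv rfl
    have h2 := sum_inv_Lam_le m (depth v) (by exact_mod_cast hdge v hv)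
    have h3 : 1 ≤ ell m (depth v : ℝ) := ell_ge_one (hdge v hv) m
    nlinarith [mul_le_mul_of_nonneg_left h2 hS0]
  -- key per-vertex estimate
  have key : ∀ v, v ≠ o →
      ‖Der parent (fun v => ψ v * f v) v‖ * Lam n (depth v)
        ≤ (μ + ν) * (‖f o‖ + S) := by
    intro v hv
    have hone := hdge v hv
    have hLm := Lam_pos hone m
    have hLn := Lam_pos hone n
    have hsplit : Der parent (fun v => ψ v * f v) v
        = Der parent ψ v * f v + ψ (parent v) * Der parent f v := by
      simp only [Der]; ring
    have htri : ‖Der parent (fun v => ψ v * f v) v‖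
        ≤ ‖Der parent ψ v‖ * ‖f v‖
          + ‖ψ (parent v)‖ * ‖Der parent f v‖ := by
      rw [hsplit]
      refine le_trans (norm_add_le _ _) ?_
      simp [map_mul]
    set A := ‖Der parent ψ v‖ with hA
    set B := ‖f v‖ with hB
    set C := ‖ψ (parent v)‖ with hC
    set D := ‖Der parent f v‖ with hD
    have hA0 : 0 ≤ A := norm_nonneg _
    have hC0 : 0 ≤ C := norm_nonneg _
    have hD0 : 0 ≤ D := norm_nonneg _
    have ht1 : A * B * Lam n (depth v) ≤ μ * (‖f o‖ + S) := by
      have hfv := hpt v hv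
      have h1 : A * B * Lam n (depth v)
          ≤ (A * ell m (depth v) * Lam n (depth v)) * (‖f o‖ + S) := by
        nlinarith [mul_le_mul_of_nonneg_left hfv (mul_nonneg hA0 hLn.le)]
      exact le_trans h1 (mul_le_mul_of_nonneg_right (hμ_le v hv) (by linarith))
    have ht2 : C * D * Lam n (depth v) ≤ ν * (‖f o‖ + S) := by
      have e : C * D * Lam n (depth v)
          = (C * Lam n (depth v) / Lam m (depth v)) * (D * Lam m (depth v)) := by
        field_simp
      rw [e]
      exact mul_le_mul (hν_le v hv)
        (le_trans (hS_le v hv) (by linarith))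
        (mul_nonneg hD0 hLm.le) hν0
    nlinarith [mul_le_mul_of_nonneg_right htri hLn.le]
  -- conclusion
  have hmemψ : (‖Der parent (fun v => ψ v * f v) w‖ * Lam n (depth w))
      ∈ lipSet o parent depth n (fun v => ψ v * f v) := ⟨w, hw, rfl⟩
  have hbdd : BddAbove (lipSet o parent depth n (fun v => ψ v * f v)) := by
    refine ⟨(μ + ν) * (‖f o‖ + S), ?_⟩
    rintro r ⟨v, hv, rfl⟩
    exact key v hv
  refine ⟨hbdd, ?_⟩
  have hsup : sSup (lipSet o parent depth n (fun v => ψ v * f v))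
      ≤ (μ + ν) * (‖f o‖ + S) := by
    refine csSup_le ⟨_, hmemψ⟩ ?_
    rintro r ⟨v, hv, rfl⟩
    exact key v hv
  simp only [lipNorm, norm_mul]
  rw [← hSdef]
  have hψo0 : (0:ℝ) ≤ ‖ψ o‖ := norm_nonneg _
  nlinarith [mul_le_mul_of_nonneg_left hS0 hψo0]
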